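/- Let μ be the distribution on functions f : [2^k] → [m^k] defined by digits a_s + b (a_s uniform on {0,...,m-2} independently over prefixes s), and for j ∈ [k] let ν^j be the distribution of g(x) = f(x XOR 2^(k-1-j)) for f ~ μ. If α is a good assignment (a partial function α : S → [m^k], S ⊆ [2^k], all values of α having no m-ary digit equal to 0 or m−1) and α does not cut index j, then Pr_{f~μ}[f agrees with α on S] = Pr_{g~ν^j}[g agrees with α on S]. -/

import Mathlib

/-- Index type for binary strings of length `< k`. -/
abbrev PrefixIdx (k : ℕ) := Σ i : Fin k, Fin (2 ^ (i : ℕ))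

/-- Independent uniform samples `a_s ∈ {0,…,m-2}` for each binary string `s` of
length `< k` (degenerates if `m ≤ 1`). -/
noncomputable def aDist (m k : ℕ) : PMF (PrefixIdx k → ℕ) :=
  if h : (Fintype.piFinset fun _ : PrefixIdx k => Finset.range (m - 1)).Nonempty then
    PMF.uniformOfFinset _ h
  else PMF.pure fun _ => 0

/-- `f x` has `i`-th `m`-ary digit `a_s + b` (digit 0 most significant), where
`s` is the length-`i` prefix of the `k`-bit string `x` and `b` is bit `i` of `x`. -/
def digitFun (m k : ℕ) (a : PrefixIdx k → ℕ) (x : ℕ) : ℕ :=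
  ∑ i : Fin k,
    (a ⟨i, ⟨x / 2 ^ (k - (i : ℕ)) % 2 ^ (i : ℕ),
        Nat.mod_lt _ (Nat.two_pow_pos _)⟩⟩
      + (x.testBit (k - 1 - (i : ℕ))).toNat) * m ^ (k - 1 - (i : ℕ))

/-- A value in `[m^k]` is good if none of its `m`-ary digits is `0` or `m-1`. -/
def GoodVal (m k v : ℕ) : Prop :=
  ∀ i < k, v / m ^ (k - 1 - i) % m ≠ 0 ∧ v / m ^ (k - 1 - i) % m ≠ m - 1

/-- `S` cuts index `j` if there are `x < y` in `S` agreeing on bits `0,…,j-1`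
and differing in bit `j` (bit `i` of `x` is `x.testBit (k-1-i)`). -/
def Cuts (k : ℕ) (S : Finset ℕ) (j : ℕ) : Prop :=
  ∃ x ∈ S, ∃ y ∈ S, x < y ∧
    (∀ i < j, x.testBit (k - 1 - i) = y.testBit (k - 1 - i)) ∧
    x.testBit (k - 1 - j) ≠ y.testBit (k - 1 - j)

/-! ### Generic base-`m` digit lemmas -/

lemma sum_digits_lt (m u : ℕ) (h : ℕ → ℕ) (hb : ∀ i < u, h i < m) :
    ∑ i ∈ Finset.range u, h i * m ^ i < m ^ u := by
  induction u with
  | zero => simp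
  | succ n ih =>
    have h1 : ∑ i ∈ Finset.range n, h i * m ^ i < m ^ n :=
      ih fun i hi => hb i (by omega)
    have h2 : h n + 1 ≤ m := hb n (by omega)
    rw [Finset.sum_range_succ]
    calc (∑ i ∈ Finset.range n, h i * m ^ i) + h n * m ^ n
        < m ^ n + h n * m ^ n := by omega
      _ = (h n + 1) * m ^ n := by ring
      _ ≤ m * m ^ n := Nat.mul_le_mul_right _ h2
      _ = m ^ (n + 1) := by rw [pow_succ]; ring

lemma digit_extract (m u kk : ℕ) (h : ℕ → ℕ) (hu : u < kk) (hb : ∀ i < kk, h i < m) :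
    (∑ i ∈ Finset.range kk, h i * m ^ i) / m ^ u % m = h u := by
  have hm : 0 < m := by have := hb u hu; omega
  have split1 : (∑ i ∈ Finset.Ico 0 (u + 1), h i * m ^ i)
      + ∑ i ∈ Finset.Ico (u + 1) kk, h i * m ^ i
      = ∑ i ∈ Finset.Ico 0 kk, h i * m ^ i :=
    Finset.sum_Ico_consecutive _ (by omega) (by omega)
  have t2 : ∑ i ∈ Finset.Ico (u + 1) kk, h i * m ^ i
      = m ^ (u + 1) * ∑ t ∈ Finset.range (kk - (u + 1)), h (u + 1 + t) * m ^ t := by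
    rw [Finset.sum_Ico_eq_sum_range, Finset.mul_sum]
    refine Finset.sum_congr rfl fun t _ => ?_
    rw [pow_add]; ring
  have hL : ∑ i ∈ Finset.range u, h i * m ^ i < m ^ u :=
    sum_digits_lt m u h fun i hi => hb i (by omega)
  set L := ∑ i ∈ Finset.range u, h i * m ^ i with hLdef
  set R := ∑ t ∈ Finset.range (kk - (u + 1)), h (u + 1 + t) * m ^ t with hRdef
  have main : ∑ i ∈ Finset.range kk, h i * m ^ i = L + m ^ u * (h u + m * R) := by
    rw [Finset.range_eq_Ico, ← split1, t2]
    rw [show Finset.Ico 0 (u + 1) = Finset.range (u + 1) from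
      (Finset.range_eq_Ico (u + 1)).symm]
    rw [Finset.sum_range_succ, ← hLdef, pow_succ]
    ring
  rw [main, Nat.add_mul_div_left _ _ (pow_pos hm u), Nat.div_eq_of_lt hL,
    Nat.zero_add, Nat.add_mul_mod_self_left, Nat.mod_eq_of_lt (hb u hu)]

lemma recon_mod (m kk v : ℕ) : ∑ i ∈ Finset.range kk, (v / m ^ i % m) * m ^ i = v % m ^ kk := by
  induction kk with
  | zero => simp [Nat.mod_one]
  | succ n ih =>
    rw [Finset.sum_range_succ, ih, Nat.mod_pow_succ]
    ring

lemma recon (m kk v : ℕ) (hv : v < m ^ kk) :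
    v = ∑ i ∈ Finset.range kk, (v / m ^ i % m) * m ^ i := by
  rw [recon_mod, Nat.mod_eq_of_lt hv]

/-! ### Prefix/bit lemmas -/

lemma testBit_pfx (x d w n : ℕ) :
    ((x / 2 ^ d) % 2 ^ w).testBit n = (decide (n < w) && x.testBit (d + n)) := by
  rw [Nat.testBit_mod_two_pow, ← Nat.shiftRight_eq_div_pow, Nat.testBit_shiftRight]

lemma pfx_xor_low {k j i : ℕ} (hij : i ≤ j) (hjk : j < k) (x : ℕ) :
    (x ^^^ 2 ^ (k - 1 - j)) / 2 ^ (k - i) % 2 ^ i = x / 2 ^ (k - i) % 2 ^ i := by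
  apply Nat.eq_of_testBit_eq; intro n
  rw [testBit_pfx, testBit_pfx, Nat.testBit_xor, Nat.testBit_two_pow]
  by_cases hn : n < i
  · rw [decide_eq_false (show ¬ (k - 1 - j = k - i + n) by omega)]
    simp [hn]
  · simp [hn]

lemma pfx_xor_high {k j i : ℕ} (hji : j < i) (hik : i ≤ k) (x : ℕ) :
    (x ^^^ 2 ^ (k - 1 - j)) / 2 ^ (k - i) % 2 ^ i
      = (x / 2 ^ (k - i) % 2 ^ i) ^^^ 2 ^ (i - 1 - j) := by
  apply Nat.eq_of_testBit_eq; intro n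
  rw [Nat.testBit_xor, testBit_pfx, testBit_pfx, Nat.testBit_xor, Nat.testBit_two_pow,
    Nat.testBit_two_pow]
  by_cases hn : n < i
  · rw [show (decide (k - 1 - j = k - i + n)) = (decide (i - 1 - j = n)) from
      decide_eq_decide.mpr (by omega)]
    simp [hn]
  · have h2 : ¬ (i - 1 - j = n) := by omega
    simp [hn, h2]

lemma bit_xor_ne (x t n : ℕ) (h : n ≠ t) : (x ^^^ 2 ^ t).testBit n = x.testBit n := by
  rw [Nat.testBit_xor, Nat.testBit_two_pow, decide_eq_false (fun hh => h hh.symm)]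
  simp

lemma bit_xor_self (x t : ℕ) : (x ^^^ 2 ^ t).testBit t = !x.testBit t := by
  rw [Nat.testBit_xor, Nat.testBit_two_pow_self]
  simp

lemma testBit_of_pfx_eq {k j x y : ℕ} (hjk : j ≤ k)
    (hp : x / 2 ^ (k - j) % 2 ^ j = y / 2 ^ (k - j) % 2 ^ j) {i : ℕ} (hi : i < j) :
    x.testBit (k - 1 - i) = y.testBit (k - 1 - i) := by
  have h1 := congrArg (fun z => z.testBit (j - 1 - i)) hp
  simp only [testBit_pfx] at h1
  rw [show k - j + (j - 1 - i) = k - 1 - i by omega] at h1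
  rw [decide_eq_true (show j - 1 - i < j by omega)] at h1
  simpa using h1

/-! ### The bijection -/

lemma apply_congr {k : ℕ} (a : PrefixIdx k → ℕ) {i i' : Fin k} {s : Fin (2 ^ (i : ℕ))}
    {s' : Fin (2 ^ ((i' : ℕ)))} (h1 : (i : ℕ) = (i' : ℕ)) (h2 : (s : ℕ) = (s' : ℕ)) :
    a ⟨i, s⟩ = a ⟨i', s'⟩ := by
  obtain ⟨iv, hi⟩ := i
  obtain ⟨iv', hi'⟩ := i'
  simp only at h1
  subst h1
  exact congrArg (fun t => a ⟨⟨iv, hi⟩, t⟩) (Fin.ext h2)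

def bitJ (k j : ℕ) (S : Finset ℕ) (s : ℕ) : Bool :=
  decide (∃ x ∈ S, x / 2 ^ (k - j) % 2 ^ j = s ∧ x.testBit (k - 1 - j) = true)

lemma bitJ_eq {k j : ℕ} {S : Finset ℕ} (hjk : j < k) (hnocut : ¬ Cuts k S j)
    {x : ℕ} (hx : x ∈ S) : bitJ k j S (x / 2 ^ (k - j) % 2 ^ j) = x.testBit (k - 1 - j) := by
  cases h : x.testBit (k - 1 - j) with
  | true =>
    simp only [bitJ, decide_eq_true_eq]
    exact ⟨x, hx, rfl, h⟩
  | false =>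
    simp only [bitJ, decide_eq_false_iff_not]
    rintro ⟨y, hy, hpf, hby⟩
    have hagree : ∀ i < j, x.testBit (k - 1 - i) = y.testBit (k - 1 - i) :=
      fun i hi => testBit_of_pfx_eq (by omega) hpf.symm hi
    have hne : x.testBit (k - 1 - j) ≠ y.testBit (k - 1 - j) := by rw [h, hby]; simp
    rcases lt_trichotomy x y with hlt | heq | hgt
    · exact hnocut ⟨x, hx, y, hy, hlt, hagree, hne⟩
    · rw [heq] at h; rw [h] at hby; exact absurd hby (by simp)
    · exact hnocut ⟨y, hy, x, hx, hgt, fun i hi => (hagree i hi).symm, hne.symm⟩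

def Phi (k j : ℕ) (S : Finset ℕ) (c : Bool) (a : PrefixIdx k → ℕ) (q : PrefixIdx k) : ℕ :=
  if h : j < (q.1 : ℕ) then
    a ⟨q.1, ⟨(q.2 : ℕ) ^^^ 2 ^ ((q.1 : ℕ) - 1 - j),
      Nat.xor_lt_two_pow q.2.isLt (Nat.pow_lt_pow_right one_lt_two (by omega))⟩⟩
  else if ((q.1 : ℕ) = j ∧ ∃ x ∈ S, x / 2 ^ (k - j) % 2 ^ j = (q.2 : ℕ)) then
    (if bitJ k j S (q.2 : ℕ) = c then a q + 1 else a q - 1)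
  else a q

/-! ### Digit extraction for `digitFun` -/

lemma digitFun_eq_sum (m k : ℕ) (a : PrefixIdx k → ℕ) (x : ℕ) :
    digitFun m k a x
      = ∑ i ∈ Finset.range k,
          (if hi : k - 1 - i < k then
            (a ⟨⟨k - 1 - i, hi⟩, ⟨x / 2 ^ (k - (k - 1 - i)) % 2 ^ (k - 1 - i),
              Nat.mod_lt _ (Nat.two_pow_pos _)⟩⟩
              + (x.testBit (k - 1 - (k - 1 - i))).toNat)
          else 0) * m ^ i := by
  classical
  set h : ℕ → ℕ := fun i =>
    if hi : i < k then
      (a ⟨⟨i, hi⟩, ⟨x / 2 ^ (k - i) % 2 ^ i, Nat.mod_lt _ (Nat.two_pow_pos _)⟩⟩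
        + (x.testBit (k - 1 - i)).toNat)
    else 0 with hdef
  have e1 : digitFun m k a x = ∑ i ∈ Finset.range k, h i * m ^ (k - 1 - i) := by
    rw [digitFun, ← Fin.sum_univ_eq_sum_range (fun i => h i * m ^ (k - 1 - i)) k]
    refine Finset.sum_congr rfl fun i _ => ?_
    rw [hdef]
    simp only [dif_pos i.isLt]
  rw [e1, ← Finset.sum_range_reflect (fun i => h (k - 1 - i) * m ^ i) k]
  refine Finset.sum_congr rfl fun i hi => ?_
  rw [Finset.mem_range] at hi
  rw [show k - 1 - (k - 1 - i) = i by omega]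

lemma digitFun_digit (m k : ℕ) (hm : 2 ≤ m) (a : PrefixIdx k → ℕ)
    (ha : ∀ q, a q < m - 1) (x : ℕ) (i : Fin k) :
    digitFun m k a x / m ^ (k - 1 - (i : ℕ)) % m
      = a ⟨i, ⟨x / 2 ^ (k - (i : ℕ)) % 2 ^ (i : ℕ), Nat.mod_lt _ (Nat.two_pow_pos _)⟩⟩
        + (x.testBit (k - 1 - (i : ℕ))).toNat := by
  classical
  rw [digitFun_eq_sum]
  rw [digit_extract m (k - 1 - (i : ℕ)) k _ (by omega)]
  · have hik : k - 1 - (k - 1 - (i : ℕ)) = (i : ℕ) := by omega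
    rw [hik, dif_pos i.isLt]
  · intro t ht
    have h2 : k - 1 - t < k := by omega
    rw [dif_pos h2]
    have := ha ⟨⟨k - 1 - t, h2⟩, ⟨x / 2 ^ (k - (k - 1 - t)) % 2 ^ (k - 1 - t),
      Nat.mod_lt _ (Nat.two_pow_pos _)⟩⟩
    have hb : ((x.testBit (k - 1 - (k - 1 - t))).toNat) ≤ 1 := Bool.toNat_le _
    omega

lemma val_recon (m k v : ℕ) (hv : v < m ^ k) :
    v = ∑ i : Fin k, (v / m ^ (k - 1 - (i : ℕ)) % m) * m ^ (k - 1 - (i : ℕ)) := by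
  rw [Fin.sum_univ_eq_sum_range (fun i => (v / m ^ (k - 1 - i) % m) * m ^ (k - 1 - i)) k]
  rw [Finset.sum_range_reflect (fun i => (v / m ^ i % m) * m ^ i) k]
  exact recon m k v hv

/-! ### Evaluation lemmas for `Phi` -/

lemma Phi_low {k j : ℕ} {S : Finset ℕ} {c : Bool} {a : PrefixIdx k → ℕ} {i : Fin k}
    (hij : (i : ℕ) < j) (s : Fin (2 ^ (i : ℕ))) :
    Phi k j S c a ⟨i, s⟩ = a ⟨i, s⟩ := by
  rw [Phi, dif_neg (by omega : ¬ j < (i : ℕ)), if_neg (by rintro ⟨h1, -⟩; exact absurd h1 (show ¬ (i : ℕ) = j by omega))]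

lemma Phi_eq {k j : ℕ} {S : Finset ℕ} {c : Bool} {a : PrefixIdx k → ℕ} {i : Fin k}
    (hij : (i : ℕ) = j) (s : Fin (2 ^ (i : ℕ)))
    (hpre : ∃ x ∈ S, x / 2 ^ (k - j) % 2 ^ j = (s : ℕ)) :
    Phi k j S c a ⟨i, s⟩
      = if bitJ k j S (s : ℕ) = c then a ⟨i, s⟩ + 1 else a ⟨i, s⟩ - 1 := by
  rw [Phi, dif_neg (by omega : ¬ j < (i : ℕ)), if_pos ⟨hij, hpre⟩]

lemma Phi_eq_nopre {k j : ℕ} {S : Finset ℕ} {c : Bool} {a : PrefixIdx k → ℕ} {i : Fin k}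
    (hij : (i : ℕ) = j) (s : Fin (2 ^ (i : ℕ)))
    (hpre : ¬ ∃ x ∈ S, x / 2 ^ (k - j) % 2 ^ j = (s : ℕ)) :
    Phi k j S c a ⟨i, s⟩ = a ⟨i, s⟩ := by
  rw [Phi, dif_neg (by omega : ¬ j < (i : ℕ)), if_neg (by rintro ⟨-, h2⟩; exact hpre h2)]

lemma Phi_high {k j : ℕ} {S : Finset ℕ} {c : Bool} {a : PrefixIdx k → ℕ} {i : Fin k}
    (hij : j < (i : ℕ)) (s : Fin (2 ^ (i : ℕ))) :
    Phi k j S c a ⟨i, s⟩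
      = a ⟨i, ⟨(s : ℕ) ^^^ 2 ^ ((i : ℕ) - 1 - j),
          Nat.xor_lt_two_pow s.isLt (Nat.pow_lt_pow_right one_lt_two
            (show (i : ℕ) - 1 - j < (i : ℕ) by omega))⟩⟩ := by
  rw [Phi, dif_pos hij]

/-! ### The digit-`j` constraint -/

lemma key_j (m k j : ℕ) (hm : 2 ≤ m) (hj : j < k) (c : Bool)
    {a : PrefixIdx k → ℕ} (ha : ∀ q, a q < m - 1) {α : ℕ → ℕ} {x : ℕ}
    (hEx : digitFun m k a (cond c x (x ^^^ 2 ^ (k - 1 - j))) = α x) :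
    α x / m ^ (k - 1 - j) % m
      = a ⟨⟨j, hj⟩, ⟨x / 2 ^ (k - j) % 2 ^ j, Nat.mod_lt _ (Nat.two_pow_pos _)⟩⟩
        + ((x.testBit (k - 1 - j)) == c).toNat := by
  have hkj : α x / m ^ (k - 1 - j) % m
      = a ⟨⟨j, hj⟩, ⟨(cond c x (x ^^^ 2 ^ (k - 1 - j))) / 2 ^ (k - j) % 2 ^ j,
          Nat.mod_lt _ (Nat.two_pow_pos _)⟩⟩
        + ((cond c x (x ^^^ 2 ^ (k - 1 - j))).testBit (k - 1 - j)).toNat := by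
    rw [← hEx]
    exact digitFun_digit m k hm a ha _ ⟨j, hj⟩
  rw [hkj]
  congr 1
  · refine apply_congr a rfl ?_
    cases c
    · exact pfx_xor_low le_rfl hj x
    · rfl
  · congr 1
    cases c <;> cases hxb : x.testBit (k - 1 - j) <;> simp [bit_xor_self, hxb]

/-! ### The main term computation -/

lemma term_eq (m k j : ℕ) (hm : 2 ≤ m) (hj : j < k) {S : Finset ℕ}
    (hnocut : ¬ Cuts k S j) (c : Bool) {a : PrefixIdx k → ℕ} (ha : ∀ q, a q < m - 1)
    {α : ℕ → ℕ} {x : ℕ} (hx : x ∈ S)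
    (hEx : digitFun m k a (cond c x (x ^^^ 2 ^ (k - 1 - j))) = α x)
    (hd0 : α x / m ^ (k - 1 - j) % m ≠ 0)
    (i : Fin k) :
    Phi k j S c a ⟨i, ⟨(cond c (x ^^^ 2 ^ (k - 1 - j)) x) / 2 ^ (k - (i : ℕ)) % 2 ^ (i : ℕ),
        Nat.mod_lt _ (Nat.two_pow_pos _)⟩⟩
      + ((cond c (x ^^^ 2 ^ (k - 1 - j)) x).testBit (k - 1 - (i : ℕ))).toNat
      = α x / m ^ (k - 1 - (i : ℕ)) % m := by
  have hkey : ∀ i : Fin k, α x / m ^ (k - 1 - (i : ℕ)) % m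
      = a ⟨i, ⟨(cond c x (x ^^^ 2 ^ (k - 1 - j))) / 2 ^ (k - (i : ℕ)) % 2 ^ (i : ℕ),
          Nat.mod_lt _ (Nat.two_pow_pos _)⟩⟩
        + ((cond c x (x ^^^ 2 ^ (k - 1 - j))).testBit (k - 1 - (i : ℕ))).toNat := by
    intro i; rw [← hEx]; exact digitFun_digit m k hm a ha _ i
  rcases lt_trichotomy (i : ℕ) j with hij | hij | hij
  · -- low digits
    have hp : (cond c (x ^^^ 2 ^ (k - 1 - j)) x) / 2 ^ (k - (i : ℕ)) % 2 ^ (i : ℕ)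
        = (cond c x (x ^^^ 2 ^ (k - 1 - j))) / 2 ^ (k - (i : ℕ)) % 2 ^ (i : ℕ) := by
      cases c
      · exact (pfx_xor_low hij.le hj x).symm
      · exact pfx_xor_low hij.le hj x
    have hb : (cond c (x ^^^ 2 ^ (k - 1 - j)) x).testBit (k - 1 - (i : ℕ))
        = (cond c x (x ^^^ 2 ^ (k - 1 - j))).testBit (k - 1 - (i : ℕ)) := by
      have hne : k - 1 - (i : ℕ) ≠ k - 1 - j := by omega
      cases c
      · exact (bit_xor_ne x _ _ hne).symm
      · exact bit_xor_ne x _ _ hne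
    rw [Phi_low hij, hkey i, hb]
    exact congrArg (· + _) (apply_congr a rfl hp)
  · -- digit j
    have hpz : (cond c (x ^^^ 2 ^ (k - 1 - j)) x) / 2 ^ (k - (i : ℕ)) % 2 ^ (i : ℕ)
        = x / 2 ^ (k - j) % 2 ^ j := by
      rw [hij]
      cases c
      · rfl
      · exact pfx_xor_low le_rfl hj x
    have hpre : ∃ x' ∈ S, x' / 2 ^ (k - j) % 2 ^ j
        = ((cond c (x ^^^ 2 ^ (k - 1 - j)) x) / 2 ^ (k - (i : ℕ)) % 2 ^ (i : ℕ)) :=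
      ⟨x, hx, hpz.symm⟩
    rw [Phi_eq hij _ hpre]
    have hbJ : bitJ k j S ((cond c (x ^^^ 2 ^ (k - 1 - j)) x) / 2 ^ (k - (i : ℕ)) % 2 ^ (i : ℕ))
        = x.testBit (k - 1 - j) := by
      rw [hpz]; exact bitJ_eq hj hnocut hx
    have haq : a ⟨i, ⟨(cond c (x ^^^ 2 ^ (k - 1 - j)) x) / 2 ^ (k - (i : ℕ)) % 2 ^ (i : ℕ),
          Nat.mod_lt _ (Nat.two_pow_pos _)⟩⟩
        = a ⟨⟨j, hj⟩, ⟨x / 2 ^ (k - j) % 2 ^ j, Nat.mod_lt _ (Nat.two_pow_pos _)⟩⟩ :=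
      apply_congr a hij hpz
    have hkj := key_j m k j hm hj c ha hEx
    have hbz : (cond c (x ^^^ 2 ^ (k - 1 - j)) x).testBit (k - 1 - (i : ℕ))
        = ((x.testBit (k - 1 - j)) == !c) := by
      rw [hij]
      cases c <;> cases hxb : x.testBit (k - 1 - j) <;> simp [bit_xor_self, hxb]
    rw [hbJ, haq, hbz, show k - 1 - (i : ℕ) = k - 1 - j from by rw [hij], hkj]
    rw [hkj] at hd0
    cases c <;> cases hxb : x.testBit (k - 1 - j) <;>
      simp only [hxb, Bool.not_true, Bool.not_false] <;> simp_all <;> omega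
  · -- high digits
    have hik : (i : ℕ) ≤ k := i.isLt.le
    have hp : ((cond c (x ^^^ 2 ^ (k - 1 - j)) x) / 2 ^ (k - (i : ℕ)) % 2 ^ (i : ℕ))
          ^^^ 2 ^ ((i : ℕ) - 1 - j)
        = (cond c x (x ^^^ 2 ^ (k - 1 - j))) / 2 ^ (k - (i : ℕ)) % 2 ^ (i : ℕ) := by
      cases c
      · exact (pfx_xor_high hij hik x).symm
      · show ((x ^^^ 2 ^ (k - 1 - j)) / 2 ^ (k - (i : ℕ)) % 2 ^ (i : ℕ)) ^^^ 2 ^ ((i : ℕ) - 1 - j)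
          = x / 2 ^ (k - (i : ℕ)) % 2 ^ (i : ℕ)
        rw [pfx_xor_high hij hik x]
        exact xor_cancel_right _ _
    have hb : (cond c (x ^^^ 2 ^ (k - 1 - j)) x).testBit (k - 1 - (i : ℕ))
        = (cond c x (x ^^^ 2 ^ (k - 1 - j))).testBit (k - 1 - (i : ℕ)) := by
      have hne : k - 1 - (i : ℕ) ≠ k - 1 - j := by omega
      cases c
      · exact (bit_xor_ne x _ _ hne).symm
      · exact bit_xor_ne x _ _ hne
    rw [Phi_high hij, hkey i, hb]
    exact congrArg (· + _) (apply_congr a rfl hp)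

/-! ### Assembling: agreement is pushed through `Phi` -/

lemma push_agree (m k j : ℕ) (hm : 2 ≤ m) (hj : j < k) {S : Finset ℕ}
    (hnocut : ¬ Cuts k S j) (c : Bool) {a : PrefixIdx k → ℕ} (ha : ∀ q, a q < m - 1)
    {α : ℕ → ℕ} (hval : ∀ x ∈ S, α x < m ^ k)
    (hgood : ∀ x ∈ S, GoodVal m k (α x))
    (hE : ∀ x ∈ S, digitFun m k a (cond c x (x ^^^ 2 ^ (k - 1 - j))) = α x) :
    ∀ x ∈ S, digitFun m k (Phi k j S c a) (cond c (x ^^^ 2 ^ (k - 1 - j)) x) = α x := by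
  intro x hx
  rw [digitFun]
  conv_rhs => rw [val_recon m k (α x) (hval x hx)]
  refine Finset.sum_congr rfl fun i _ => ?_
  exact congrArg (· * m ^ (k - 1 - (i : ℕ)))
    (term_eq m k j hm hj hnocut c ha hx (hE x hx) ((hgood x hx) j hj).1 i)

lemma phi_mem (m k j : ℕ) (hm : 2 ≤ m) (hj : j < k) {S : Finset ℕ}
    (hnocut : ¬ Cuts k S j) (c : Bool) {a : PrefixIdx k → ℕ} (ha : ∀ q, a q < m - 1)
    {α : ℕ → ℕ} (hgood : ∀ x ∈ S, GoodVal m k (α x))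
    (hE : ∀ x ∈ S, digitFun m k a (cond c x (x ^^^ 2 ^ (k - 1 - j))) = α x) :
    ∀ q, Phi k j S c a q < m - 1 := by
  rintro ⟨i, s⟩
  rcases lt_trichotomy (i : ℕ) j with hij | hij | hij
  · rw [Phi_low hij]; exact ha _
  · by_cases hpre : ∃ x ∈ S, x / 2 ^ (k - j) % 2 ^ j = (s : ℕ)
    · rw [Phi_eq hij s hpre]
      by_cases hbc : bitJ k j S (s : ℕ) = c
      · rw [if_pos hbc]
        obtain ⟨x, hx, hpfx⟩ := hpre
        have hkj := key_j m k j hm hj c ha (hE x hx)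
        have hbj : bitJ k j S (s : ℕ) = x.testBit (k - 1 - j) := by
          rw [← hpfx]; exact bitJ_eq hj hnocut hx
        have hb : x.testBit (k - 1 - j) = c := by rw [← hbj]; exact hbc
        rw [hb] at hkj
        simp only [beq_self_eq_true, Bool.toNat_true] at hkj
        have haq : a ⟨i, s⟩
            = a ⟨⟨j, hj⟩, ⟨x / 2 ^ (k - j) % 2 ^ j, Nat.mod_lt _ (Nat.two_pow_pos _)⟩⟩ :=
          apply_congr a hij hpfx.symm
        have hdm : α x / m ^ (k - 1 - j) % m ≠ m - 1 := ((hgood x hx) j hj).2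
        have hdlt : α x / m ^ (k - 1 - j) % m < m := Nat.mod_lt _ (by omega)
        omega
      · rw [if_neg hbc]
        have := ha ⟨i, s⟩
        omega
    · rw [Phi_eq_nopre hij s hpre]; exact ha _
  · rw [Phi_high hij]; exact ha _

lemma phi_invol (m k j : ℕ) (hm : 2 ≤ m) (hj : j < k) {S : Finset ℕ}
    (hnocut : ¬ Cuts k S j) (c : Bool) {a : PrefixIdx k → ℕ} (ha : ∀ q, a q < m - 1)
    {α : ℕ → ℕ} (hgood : ∀ x ∈ S, GoodVal m k (α x))
    (hE : ∀ x ∈ S, digitFun m k a (cond c x (x ^^^ 2 ^ (k - 1 - j))) = α x) :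
    Phi k j S (!c) (Phi k j S c a) = a := by
  funext q
  obtain ⟨i, s⟩ := q
  rcases lt_trichotomy (i : ℕ) j with hij | hij | hij
  · rw [Phi_low hij, Phi_low hij]
  · by_cases hpre : ∃ x ∈ S, x / 2 ^ (k - j) % 2 ^ j = (s : ℕ)
    · rw [Phi_eq hij s hpre, Phi_eq hij s hpre]
      by_cases hbc : bitJ k j S (s : ℕ) = c
      · rw [if_neg (by rw [hbc]; cases c <;> simp), if_pos hbc]
        omega
      · have hbc' : bitJ k j S (s : ℕ) = !c := by
          cases c <;> cases hb : bitJ k j S (s : ℕ) <;> simp_all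
        rw [if_pos hbc', if_neg hbc]
        obtain ⟨x, hx, hpfx⟩ := hpre
        have hkj := key_j m k j hm hj c ha (hE x hx)
        have hbj : bitJ k j S (s : ℕ) = x.testBit (k - 1 - j) := by
          rw [← hpfx]; exact bitJ_eq hj hnocut hx
        have hb : x.testBit (k - 1 - j) ≠ c := by rw [← hbj]; exact hbc
        have hbeq : (x.testBit (k - 1 - j) == c) = false := by
          cases c <;> cases hxb : x.testBit (k - 1 - j) <;> simp_all
        rw [hbeq] at hkj
        simp only [Bool.toNat_false, Nat.add_zero] at hkj
        have haq : a ⟨i, s⟩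
            = a ⟨⟨j, hj⟩, ⟨x / 2 ^ (k - j) % 2 ^ j, Nat.mod_lt _ (Nat.two_pow_pos _)⟩⟩ :=
          apply_congr a hij hpfx.symm
        have hd0 : α x / m ^ (k - 1 - j) % m ≠ 0 := ((hgood x hx) j hj).1
        omega
    · rw [Phi_eq_nopre hij s hpre, Phi_eq_nopre hij s hpre]
  · rw [Phi_high hij, Phi_high hij]
    exact apply_congr a rfl (xor_cancel_right _ _)

/-- If the good assignment `α : S → [m^k]` does not cut index `j`, then the
probability of agreeing with `α` is the same under `μ` and under `ν^j` (the
distribution of `x ↦ f (x XOR 2^(k-1-j))` for `f ~ μ`). -/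
theorem stmt12 (m k j : ℕ) (hm : 2 ≤ m) (hj : j < k)
    (S : Finset ℕ) (hS : ∀ x ∈ S, x < 2 ^ k) (α : ℕ → ℕ)
    (hval : ∀ x ∈ S, α x < m ^ k)
    (hgood : ∀ x ∈ S, GoodVal m k (α x))
    (hnocut : ¬ Cuts k S j) :
    ((aDist m k).map (digitFun m k)).toOuterMeasure {f | ∀ x ∈ S, f x = α x} =
      ((aDist m k).map (fun a x => digitFun m k a (x ^^^ 2 ^ (k - 1 - j)))).toOuterMeasure
        {g | ∀ x ∈ S, g x = α x} := by
  classical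
  have hne : (Fintype.piFinset fun _ : PrefixIdx k => Finset.range (m - 1)).Nonempty :=
    Fintype.piFinset_nonempty.mpr fun _ => ⟨0, Finset.mem_range.mpr (by omega)⟩
  rw [aDist, dif_pos hne, PMF.toOuterMeasure_map_apply, PMF.toOuterMeasure_map_apply,
    PMF.toOuterMeasure_uniformOfFinset_apply, PMF.toOuterMeasure_uniformOfFinset_apply]
  congr 1
  norm_cast
  refine Finset.card_bij' (fun a _ => Phi k j S true a) (fun a _ => Phi k j S false a)
    ?_ ?_ ?_ ?_
  · intro a haa
    simp only [Finset.mem_filter, Set.mem_preimage, Set.mem_setOf_eq,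
      Fintype.mem_piFinset, Finset.mem_range] at haa ⊢
    obtain ⟨ha, hE⟩ := haa
    refine ⟨phi_mem m k j hm hj hnocut true ha hgood hE, ?_⟩
    exact push_agree m k j hm hj hnocut true ha hval hgood hE
  · intro a haa
    simp only [Finset.mem_filter, Set.mem_preimage, Set.mem_setOf_eq,
      Fintype.mem_piFinset, Finset.mem_range] at haa ⊢
    obtain ⟨ha, hE⟩ := haa
    refine ⟨phi_mem m k j hm hj hnocut false ha hgood hE, ?_⟩
    exact push_agree m k j hm hj hnocut false ha hval hgood hE
  · intro a haa
    simp only [Finset.mem_filter, Set.mem_preimage, Set.mem_setOf_eq,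
      Fintype.mem_piFinset, Finset.mem_range] at haa
    exact phi_invol m k j hm hj hnocut true haa.1 hgood haa.2
  · intro a haa
    simp only [Finset.mem_filter, Set.mem_preimage, Set.mem_setOf_eq,
      Fintype.mem_piFinset, Finset.mem_range] at haa
    exact phi_invol m k j hm hj hnocut false haa.1 hgood haa.2
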